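/- Let J be an invertible skew-symmetric 2n×2n complex matrix and let Sp_{2n}(ℂ) = {g ∈ GL_{2n}(ℂ) : gᵀ J g = J}. Two 2n×m complex matrices A and B lie in the same orbit under the action of Sp_{2n}(ℂ) × GL_m(ℂ) given by (g,h)·M = g M h⁻¹ if and only if rank(A) = rank(B) and rank(Aᵀ J A) = rank(Bᵀ J B). -/

import Mathlib

open Matrix Module Submodule Set

set_option linter.unusedSectionVars false
set_option linter.unreachableTactic false
set_option linter.unusedTactic false
set_option linter.unnecessarySeqFocus false
set_option maxHeartbeats 1600000

namespace Stmt15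
universe u

variable {ι : Type*} [Fintype ι] [DecidableEq ι]

/-- The bilinear form `x ⬝ᵥ J *ᵥ y`. -/
noncomputable def om (J : Matrix ι ι ℂ) (x y : ι → ℂ) : ℂ := x ⬝ᵥ J *ᵥ y

variable {J : Matrix ι ι ℂ}

lemma om_add_left (x x' y : ι → ℂ) : om J (x + x') y = om J x y + om J x' y := by
  simp [om, add_dotProduct]

lemma om_smul_left (c : ℂ) (x y : ι → ℂ) : om J (c • x) y = c * om J x y := by
  simp [om, smul_dotProduct]

lemma om_add_right (x y y' : ι → ℂ) : om J x (y + y') = om J x y + om J x y' := by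
  simp [om, mulVec_add, dotProduct_add]

lemma om_smul_right (c : ℂ) (x y : ι → ℂ) : om J x (c • y) = c * om J x y := by
  simp [om, mulVec_smul, dotProduct_smul]

/-- `om` as a bilinear map. -/
noncomputable def omL (J : Matrix ι ι ℂ) : (ι → ℂ) →ₗ[ℂ] (ι → ℂ) →ₗ[ℂ] ℂ :=
  LinearMap.mk₂ ℂ (om J) om_add_left (fun c x y => om_smul_left c x y)
    om_add_right (fun c x y => om_smul_right c x y)

@[simp] lemma omL_apply (x y : ι → ℂ) : omL J x y = om J x y := rfl

lemma om_skew (hJ : Jᵀ = -J) (x y : ι → ℂ) : om J x y = - om J y x := by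
  have h1 : om J x y = (x ᵥ* J) ⬝ᵥ y := dotProduct_mulVec x J y
  have h2 : x ᵥ* J = Jᵀ *ᵥ x := (mulVec_transpose J x).symm
  rw [h1, h2, hJ]
  simp [om, neg_mulVec, dotProduct_comm]

lemma om_self (hJ : Jᵀ = -J) (x : ι → ℂ) : om J x x = 0 := by
  linear_combination (1/2 : ℂ) * (om_skew hJ x x)

lemma om_right_nondeg (hJu : IsUnit J) (y : ι → ℂ) (h : ∀ x, om J x y = 0) : y = 0 := by
  have hJv : J *ᵥ y = 0 := by
    funext i
    have := h (Pi.single i 1)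
    simpa [om, single_dotProduct] using this
  have hd : IsUnit J.det := (isUnit_iff_isUnit_det J).mp hJu
  calc y = (J⁻¹ * J) *ᵥ y := by rw [Matrix.nonsing_inv_mul J hd, one_mulVec]
    _ = J⁻¹ *ᵥ (J *ᵥ y) := by rw [← mulVec_mulVec]
    _ = 0 := by rw [hJv, mulVec_zero]

lemma om_left_nondeg (hJu : IsUnit J) (hJ : Jᵀ = -J) (x : ι → ℂ) (h : ∀ y, om J x y = 0) :
    x = 0 := by
  apply om_right_nondeg hJu
  intro z
  rw [om_skew hJ z x, h z, neg_zero]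


variable {J : Matrix ι ι ℂ}


@[simp] lemma om_zero_right {J : Matrix ι ι ℂ} (x : ι → ℂ) : om J x 0 = 0 := by simp [om]
@[simp] lemma om_zero_left {J : Matrix ι ι ℂ} (x : ι → ℂ) : om J 0 x = 0 := by simp [om]

lemma om_sum_right {J : Matrix ι ι ℂ} {κ : Type*} (S : Finset κ) (x : ι → ℂ) (y : κ → ι → ℂ) :
    om J x (∑ i ∈ S, y i) = ∑ i ∈ S, om J x (y i) := by
  classical
  induction S using Finset.induction with
  | empty => simp
  | insert a s hni ih => rw [Finset.sum_insert hni, Finset.sum_insert hni, om_add_right, ih]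

/-- membership in a span kills `om (u·)` if it kills generators -/
lemma om_eq_zero_of_mem_span {x : ι → ℂ} {S : Set (ι → ℂ)} {z : ι → ℂ}
    (hz : z ∈ span ℂ S) (h : ∀ w ∈ S, om J x w = 0) : om J x z = 0 := by
  induction hz using Submodule.span_induction with
  | mem w hw => exact h _ hw
  | zero => simp
  | add a b _ _ ha hb => rw [om_add_right, ha, hb, add_zero]
  | smul c a _ ha => rw [om_smul_right, ha, mul_zero]

lemma exists_dual (hJu : IsUnit J) {κ : Type*} [Fintype κ] {x : κ → (ι → ℂ)}
    (hx : LinearIndependent ℂ x) (c : κ → ℂ) :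
    ∃ v : ι → ℂ, ∀ i, om J (x i) v = c i := by
  set X : Matrix κ ι ℂ := of (fun i j => x i j) with hX
  have hrankX : X.rank = Fintype.card κ := by
    have h1 : Xᵀ.rank = X.rank := rank_transpose X
    have h2 : Xᵀ.rank = Fintype.card κ := by
      rw [Matrix.rank, range_mulVecLin]
      have : Set.range Xᵀ.col = Set.range x := rfl
      rw [this]
      simp [finrank_span_eq_card hx]
    omega
  have hrank : (X * J).rank = Fintype.card κ :=
    (rank_mul_eq_left_of_isUnit_det J X ((isUnit_iff_isUnit_det J).mp hJu)) ▸ hrankX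
  have hsurj : LinearMap.range (X * J).mulVecLin = ⊤ := by
    apply Submodule.eq_top_of_finrank_eq
    rw [← Matrix.rank, hrank, finrank_pi]
  have hc : c ∈ LinearMap.range (X * J).mulVecLin := by rw [hsurj]; trivial
  obtain ⟨v, hv⟩ := hc
  refine ⟨v, fun i => ?_⟩
  have : ((X * J) *ᵥ v) i = c i := by
    rw [show (X*J).mulVecLin v = (X*J) *ᵥ v from rfl] at hv; rw [hv]
  rw [← this]
  show x i ⬝ᵥ J *ᵥ v = _
  rw [dotProduct_mulVec]
  congr 1

/-- The combined adapted family. -/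
def comb (s t : ℕ) (e f u : ℕ → ι → ℂ) : (Fin s ⊕ Fin s ⊕ Fin t) → (ι → ℂ) :=
  Sum.elim (fun i => e ↑i) (Sum.elim (fun i => f ↑i) (fun j => u ↑j))

structure Adapted (J : Matrix ι ι ℂ) (s t : ℕ) (e f u : ℕ → ι → ℂ) : Prop where
  indep : LinearIndependent ℂ (comb s t e f u)
  hee : ∀ i j, i < s → j < s → om J (e i) (e j) = 0
  hff : ∀ i j, i < s → j < s → om J (f i) (f j) = 0
  hef : ∀ i j, i < s → j < s → om J (e i) (f j) = (if i = j then 1 else 0)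
  heu : ∀ i j, i < s → j < t → om J (e i) (u j) = 0
  hfu : ∀ i j, i < s → j < t → om J (f i) (u j) = 0
  huu : ∀ i j, i < t → j < t → om J (u i) (u j) = 0

/-- reindexing map used in `pairStep` -/
def σp (s t : ℕ) : (Fin (s+1) ⊕ Fin (s+1) ⊕ Fin t) → ((Fin s ⊕ Fin s ⊕ Fin (t+1)) ⊕ Fin 1)
  | .inl i => if h : (i:ℕ) < s then .inl (.inl ⟨i, h⟩) else .inl (.inr (.inr 0))
  | .inr (.inl i) => if h : (i:ℕ) < s then .inl (.inr (.inl ⟨i, h⟩)) else .inr 0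
  | .inr (.inr j) => .inl (.inr (.inr j.succ))

lemma σp_injective (s t : ℕ) : Function.Injective (σp s t) := by
  intro a b hab
  rcases a with i | i | j <;> rcases b with i' | i' | j' <;>
    simp only [σp] at hab <;>
    first
      | (split_ifs at hab <;> simp_all [Fin.ext_iff] <;> omega)
      | (simp_all [Fin.ext_iff] <;> omega)

lemma pairStep (hJu : IsUnit J) (hJs : Jᵀ = -J) {s t : ℕ} {e f u : ℕ → ι → ℂ}
    (h : Adapted J s (t+1) e f u) :
    ∃ v, Adapted J (s+1) t (Function.update e s (u 0)) (Function.update f s v)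
      (fun j => u (j+1)) := by
  classical
  set c : (Fin s ⊕ Fin s ⊕ Fin (t+1)) → ℂ :=
    Sum.elim 0 (Sum.elim 0 (fun j => if (j:ℕ) = 0 then 1 else 0)) with hc
  obtain ⟨v, hv⟩ := exists_dual hJu h.indep c
  have hve : ∀ i, i < s → om J (e i) v = 0 := fun i hi => by
    simpa [comb, hc] using hv (Sum.inl ⟨i, hi⟩)
  have hvf : ∀ i, i < s → om J (f i) v = 0 := fun i hi => by
    simpa [comb, hc] using hv (Sum.inr (Sum.inl ⟨i, hi⟩))
  have hvu : ∀ j, j < t + 1 → om J (u j) v = (if j = 0 then 1 else 0) := fun j hj => by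
    simpa [comb, hc] using hv (Sum.inr (Sum.inr ⟨j, hj⟩))
  have hvu0 : om J (u 0) v = 1 := by simpa using hvu 0 (by omega)
  have hu0l : ∀ z, z ∈ Set.range (comb s (t+1) e f u) → om J (u 0) z = 0 := by
    rintro z ⟨p, rfl⟩
    rcases p with i | i | j
    · rw [show comb s (t+1) e f u (Sum.inl i) = e ↑i from rfl, om_skew hJs,
        h.heu i 0 i.isLt (by omega), neg_zero]
    · rw [show comb s (t+1) e f u (Sum.inr (Sum.inl i)) = f ↑i from rfl, om_skew hJs,
        h.hfu i 0 i.isLt (by omega), neg_zero]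
    · exact h.huu 0 j (by omega) j.isLt
  have hvnotmem : v ∉ span ℂ (Set.range (comb s (t+1) e f u)) := by
    intro hmem
    have h0 : om J (u 0) v = 0 := om_eq_zero_of_mem_span hmem hu0l
    rw [hvu0] at h0; exact one_ne_zero h0
  have hvne : v ≠ 0 := by
    intro h0; rw [h0, om_zero_right] at hvu0; exact one_ne_zero hvu0.symm
  have hbig : LinearIndependent ℂ (Sum.elim (comb s (t+1) e f u) (fun _ : Fin 1 => v)) := by
    rw [linearIndependent_sum]
    refine ⟨by simpa using h.indep,
      by simpa using LinearIndependent.of_subsingleton (R := ℂ) (v := fun _ : Fin 1 => v) 0 (by simpa using hvne), ?_⟩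
    simp only [Sum.elim_comp_inl, Sum.elim_comp_inr]
    have hrv : Set.range (fun _ : Fin 1 => v) = {v} := by simp
    rw [hrv]
    exact (Submodule.disjoint_span_singleton' hvne).mpr hvnotmem
  have hcombeq : comb (s+1) t (Function.update e s (u 0)) (Function.update f s v)
      (fun j => u (j+1)) = (Sum.elim (comb s (t+1) e f u) (fun _ : Fin 1 => v)) ∘ (σp s t) := by
    funext p
    rcases p with i | i | j
    · by_cases hi : (i:ℕ) < s
      · simp [comb, σp, hi, Function.update_apply, Nat.ne_of_lt hi]
      · have : (i:ℕ) = s := by omega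
        simp [comb, σp, hi, this, Function.update_apply]
    · by_cases hi : (i:ℕ) < s
      · simp [comb, σp, hi, Function.update_apply, Nat.ne_of_lt hi]
      · have : (i:ℕ) = s := by omega
        simp [comb, σp, hi, this, Function.update_apply]
    · simp [comb, σp]
  refine ⟨v, ?_⟩
  constructor
  · rw [hcombeq]
    exact hbig.comp _ (σp_injective s t)
  -- hee
  · intro i j hi hj
    rcases Nat.lt_succ_iff_lt_or_eq.mp hi with hi' | rfl
    · rcases Nat.lt_succ_iff_lt_or_eq.mp hj with hj' | rfl
      · rw [Function.update_of_ne (Nat.ne_of_lt hi'), Function.update_of_ne (Nat.ne_of_lt hj')]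
        exact h.hee i j hi' hj'
      · rw [Function.update_of_ne (Nat.ne_of_lt hi'), Function.update_self]
        exact h.heu i 0 hi' (by omega)
    · rcases Nat.lt_succ_iff_lt_or_eq.mp hj with hj' | rfl
      · rw [Function.update_of_ne (Nat.ne_of_lt hj'), Function.update_self, om_skew hJs,
          h.heu j 0 hj' (by omega), neg_zero]
      · rw [Function.update_self]
        exact h.huu 0 0 (by omega) (by omega)
  -- hff
  · intro i j hi hj
    rcases Nat.lt_succ_iff_lt_or_eq.mp hi with hi' | rfl
    · rcases Nat.lt_succ_iff_lt_or_eq.mp hj with hj' | rfl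
      · rw [Function.update_of_ne (Nat.ne_of_lt hi'), Function.update_of_ne (Nat.ne_of_lt hj')]
        exact h.hff i j hi' hj'
      · rw [Function.update_of_ne (Nat.ne_of_lt hi'), Function.update_self]
        exact hvf i hi'
    · rcases Nat.lt_succ_iff_lt_or_eq.mp hj with hj' | rfl
      · rw [Function.update_of_ne (Nat.ne_of_lt hj'), Function.update_self, om_skew hJs,
          hvf j hj', neg_zero]
      · rw [Function.update_self]
        exact om_self hJs v
  -- hef
  · intro i j hi hj
    rcases Nat.lt_succ_iff_lt_or_eq.mp hi with hi' | rfl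
    · rcases Nat.lt_succ_iff_lt_or_eq.mp hj with hj' | rfl
      · rw [Function.update_of_ne (Nat.ne_of_lt hi'), Function.update_of_ne (Nat.ne_of_lt hj')]
        exact h.hef i j hi' hj'
      · rw [Function.update_of_ne (Nat.ne_of_lt hi'), Function.update_self,
          if_neg (Nat.ne_of_lt hi')]
        exact hve i hi'
    · rcases Nat.lt_succ_iff_lt_or_eq.mp hj with hj' | rfl
      · rw [Function.update_of_ne (Nat.ne_of_lt hj'), Function.update_self,
          if_neg (Ne.symm (Nat.ne_of_lt hj')), om_skew hJs, h.hfu j 0 hj' (by omega), neg_zero]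
      · rw [Function.update_self, Function.update_self, if_pos rfl]
        exact hvu0
  -- heu
  · intro i j hi hj
    rcases Nat.lt_succ_iff_lt_or_eq.mp hi with hi' | rfl
    · rw [Function.update_of_ne (Nat.ne_of_lt hi')]
      exact h.heu i (j+1) hi' (by omega)
    · rw [Function.update_self]
      exact h.huu 0 (j+1) (by omega) (by omega)
  -- hfu
  · intro i j hi hj
    rcases Nat.lt_succ_iff_lt_or_eq.mp hi with hi' | rfl
    · rw [Function.update_of_ne (Nat.ne_of_lt hi')]
      exact h.hfu i (j+1) hi' (by omega)
    · rw [Function.update_self, om_skew hJs]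
      have := hvu (j+1) (by omega)
      rw [this, if_neg (by omega), neg_zero]
  -- huu
  · intro i j hi hj
    exact h.huu (i+1) (j+1) (by omega) (by omega)

lemma adapted_congr_u {s : ℕ} {e f u u' : ℕ → ι → ℂ} (h : Adapted J s 0 e f u) :
    Adapted J s 0 e f u' := by
  have hc : comb s 0 e f u' = comb s 0 e f u := by
    funext p; rcases p with i | i | j
    · rfl
    · rfl
    · exact j.elim0
  exact ⟨hc ▸ h.indep, h.hee, h.hff, h.hef,
    fun i j _ hj => absurd hj (by omega), fun i j _ hj => absurd hj (by omega),
    fun i j hi _ => absurd hi (by omega)⟩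

private lemma sum_ite_helper1 {s : ℕ} (j : ℕ) (hj : j < s) (c : ℕ → ℂ) :
    (∑ i : Fin s, c ↑i * (if j = ↑i then 1 else 0)) = c j := by
  rw [Finset.sum_eq_single (⟨j, hj⟩ : Fin s)]
  · simp
  · intro b _ hb
    rw [if_neg fun hh => hb (Fin.ext hh.symm), mul_zero]
  · intro hmem; exact absurd (Finset.mem_univ _) hmem

private lemma sum_ite_helper2 {s : ℕ} (j : ℕ) (hj : j < s) (c : ℕ → ℂ) :
    (∑ i : Fin s, c ↑i * (if (i:ℕ) = j then 1 else 0)) = c j := by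
  rw [Finset.sum_eq_single (⟨j, hj⟩ : Fin s)]
  · simp
  · intro b _ hb
    rw [if_neg fun hh => hb (Fin.ext hh), mul_zero]
  · intro hmem; exact absurd (Finset.mem_univ _) hmem

lemma growStep (hJu : IsUnit J) (hJs : Jᵀ = -J) {s : ℕ} {e f u : ℕ → ι → ℂ}
    (h : Adapted J s 0 e f u) (hlt : 2*s < Fintype.card ι) :
    ∃ w, Adapted J s 1 e f (fun _ => w) := by
  classical
  set V0 := span ℂ (Set.range (comb s 0 e f u)) with hV0
  -- find a vector outside the span
  have hw0 : ∃ w0, w0 ∉ V0 := by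
    by_contra hcon
    push_neg at hcon
    have htop : V0 = ⊤ := Submodule.eq_top_iff'.mpr hcon
    have hfr : finrank ℂ V0 = 2*s := by
      rw [hV0, finrank_span_eq_card h.indep]
      simp [Fintype.card_sum]
      omega
    rw [htop] at hfr
    rw [finrank_top, finrank_pi] at hfr
    omega
  obtain ⟨w0, hw0⟩ := hw0
  set S1 : ι → ℂ := ∑ i : Fin s, om J (f ↑i) w0 • e ↑i with hS1
  set S2 : ι → ℂ := ∑ i : Fin s, om J (e ↑i) w0 • f ↑i with hS2
  set w : ι → ℂ := w0 + S1 + (-1 : ℂ) • S2 with hwdef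
  have hS1mem : S1 ∈ V0 := by
    apply Submodule.sum_mem
    intro i _
    exact Submodule.smul_mem _ _ (Submodule.subset_span ⟨Sum.inl i, rfl⟩)
  have hS2mem : S2 ∈ V0 := by
    apply Submodule.sum_mem
    intro i _
    exact Submodule.smul_mem _ _ (Submodule.subset_span ⟨Sum.inr (Sum.inl i), rfl⟩)
  have hwnot : w ∉ V0 := by
    intro hmem
    apply hw0
    have : w0 = w - S1 - (-1 : ℂ) • S2 := by rw [hwdef]; abel
    rw [this]
    exact Submodule.sub_mem _ (Submodule.sub_mem _ hmem hS1mem) (Submodule.smul_mem _ _ hS2mem)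
  -- om (e j) w = 0 and om (f j) w = 0
  have hexp : ∀ x : ι → ℂ, om J x w = om J x w0 + (∑ i : Fin s, om J (f ↑i) w0 * om J x (e ↑i))
      - (∑ i : Fin s, om J (e ↑i) w0 * om J x (f ↑i)) := by
    intro x
    rw [hwdef, om_add_right, om_add_right, om_smul_right, hS1, hS2,
      om_sum_right, om_sum_right]
    have h1 : ∀ i : Fin s, om J x (om J (f ↑i) w0 • e ↑i) = om J (f ↑i) w0 * om J x (e ↑i) :=
      fun i => om_smul_right _ _ _
    have h2 : ∀ i : Fin s, om J x (om J (e ↑i) w0 • f ↑i) = om J (e ↑i) w0 * om J x (f ↑i) :=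
      fun i => om_smul_right _ _ _
    rw [Finset.sum_congr rfl (fun i _ => h1 i), Finset.sum_congr rfl (fun i _ => h2 i)]
    ring
  have hew : ∀ j, j < s → om J (e j) w = 0 := by
    intro j hj
    rw [hexp]
    have hz1 : (∑ i : Fin s, om J (f ↑i) w0 * om J (e j) (e ↑i)) = 0 :=
      Finset.sum_eq_zero fun i _ => by rw [h.hee j i hj i.isLt, mul_zero]
    have hz2 : (∑ i : Fin s, om J (e ↑i) w0 * om J (e j) (f ↑i)) = om J (e j) w0 := by
      have step : (∑ i : Fin s, om J (e ↑i) w0 * om J (e j) (f ↑i))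
          = ∑ i : Fin s, om J (e ↑i) w0 * (if j = ↑i then 1 else 0) :=
        Finset.sum_congr rfl (fun i _ => by rw [h.hef j i hj i.isLt])
      rw [step]
      exact sum_ite_helper1 j hj (fun i' => om J (e i') w0)
    rw [hz1, hz2]
    ring
  have hfw : ∀ j, j < s → om J (f j) w = 0 := by
    intro j hj
    rw [hexp]
    have hz1 : (∑ i : Fin s, om J (f ↑i) w0 * om J (f j) (e ↑i)) = - om J (f j) w0 := by
      have step : (∑ i : Fin s, om J (f ↑i) w0 * om J (f j) (e ↑i))
          = ∑ i : Fin s, -(om J (f ↑i) w0 * (if (i:ℕ) = j then 1 else 0)) := by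
        refine Finset.sum_congr rfl (fun i _ => ?_)
        rw [om_skew hJs (f j) (e ↑i), h.hef i j i.isLt hj]
        ring
      rw [step, Finset.sum_neg_distrib]
      rw [sum_ite_helper2 j hj (fun i' => om J (f i') w0)]
    have hz2 : (∑ i : Fin s, om J (e ↑i) w0 * om J (f j) (f ↑i)) = 0 :=
      Finset.sum_eq_zero fun i _ => by rw [h.hff j i hj i.isLt, mul_zero]
    rw [hz1, hz2]
    ring
  refine ⟨w, ?_⟩
  have hwne : w ≠ 0 := fun h0 => hwnot (h0 ▸ Submodule.zero_mem V0)
  -- independence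
  have hbig : LinearIndependent ℂ (Sum.elim (comb s 0 e f u) (fun _ : Fin 1 => w)) := by
    rw [linearIndependent_sum]
    refine ⟨by simpa using h.indep,
      by simpa using LinearIndependent.of_subsingleton (R := ℂ) (v := fun _ : Fin 1 => w) 0 (by simpa using hwne), ?_⟩
    simp only [Sum.elim_comp_inl, Sum.elim_comp_inr]
    have hrv : Set.range (fun _ : Fin 1 => w) = {w} := by simp
    rw [hrv]
    exact (Submodule.disjoint_span_singleton' hwne).mpr hwnot
  have hcombeq : comb s 1 e f (fun _ => w)
      = (Sum.elim (comb s 0 e f u) (fun _ : Fin 1 => w)) ∘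
        (Sum.elim (fun i : Fin s => Sum.inl (Sum.inl i))
          (Sum.elim (fun i : Fin s => Sum.inl (Sum.inr (Sum.inl i)))
            (fun _ : Fin 1 => Sum.inr 0))) := by
    funext p; rcases p with i | i | j <;> rfl
  have hinj : Function.Injective
      (Sum.elim (fun i : Fin s => (Sum.inl (Sum.inl i) : (Fin s ⊕ Fin s ⊕ Fin 0) ⊕ Fin 1))
        (Sum.elim (fun i : Fin s => Sum.inl (Sum.inr (Sum.inl i)))
          (fun _ : Fin 1 => Sum.inr 0))) := by
    intro a b hab
    rcases a with i | i | j <;> rcases b with i' | i' | j' <;> simp_all [Fin.ext_iff] <;> omega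
  constructor
  · rw [hcombeq]
    exact hbig.comp _ hinj
  · exact h.hee
  · exact h.hff
  · exact h.hef
  · intro i j hi hj
    exact hew i hi
  · intro i j hi hj
    exact hfw i hi
  · intro i j hi hj
    have : i = 0 := by omega
    have hj0 : j = 0 := by omega
    subst this; subst hj0
    exact om_self hJs w

lemma pairAll (hJu : IsUnit J) (hJs : Jᵀ = -J) :
    ∀ (t s : ℕ) (e f u : ℕ → ι → ℂ), Adapted J s t e f u →
    ∃ e' f', Adapted J (s+t) 0 e' f' u ∧ (∀ i, i < s → e' i = e i) ∧
      (∀ i, i < s → f' i = f i) ∧ (∀ j, j < t → e' (s+j) = u j) := by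
  intro t
  induction t with
  | zero =>
    intro s e f u h
    exact ⟨e, f, h, fun i _ => rfl, fun i _ => rfl, fun j hj => absurd hj (by omega)⟩
  | succ t ih =>
    intro s e f u h
    obtain ⟨v, h1⟩ := pairStep hJu hJs h
    obtain ⟨e', f', h2, he', hf', hu'⟩ := ih (s+1) _ _ _ h1
    have h3 : Adapted J (s+(t+1)) 0 e' f' (fun j => u (j+1)) := by
      rwa [show s+(t+1) = (s+1)+t by omega]
    refine ⟨e', f', adapted_congr_u h3, ?_, ?_, ?_⟩
    · intro i hi
      rw [he' i (by omega), Function.update_of_ne (Nat.ne_of_lt hi)]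
    · intro i hi
      rw [hf' i (by omega), Function.update_of_ne (Nat.ne_of_lt hi)]
    · intro j hj
      rcases Nat.eq_zero_or_pos j with rfl | hjpos
      · rw [show s + 0 = s by omega, he' s (by omega), Function.update_self]
      · obtain ⟨j', rfl⟩ : ∃ j', j = j'+1 := ⟨j-1, by omega⟩
        rw [show s + (j'+1) = (s+1)+j' by omega, hu' j' (by omega)]

lemma completion (hJu : IsUnit J) (hJs : Jᵀ = -J) :
    ∀ (fuel s : ℕ) (e f u : ℕ → ι → ℂ), (Fintype.card ι - 2*s ≤ fuel) →
    Adapted J s 0 e f u →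
    ∃ k e' f', 2*k = Fintype.card ι ∧ s ≤ k ∧ Adapted J k 0 e' f' u ∧
      (∀ i, i < s → e' i = e i) ∧ (∀ i, i < s → f' i = f i) := by
  intro fuel
  induction fuel with
  | zero =>
    intro s e f u hle h
    have hcard : 2*s ≤ Fintype.card ι := by
      have h2 := h.indep.fintype_card_le_finrank
      simp [Fintype.card_sum, finrank_pi] at h2
      omega
    have : 2*s = Fintype.card ι := by omega
    exact ⟨s, e, f, this, le_refl s, h, fun i _ => rfl, fun i _ => rfl⟩
  | succ fuel ih =>
    intro s e f u hle h
    have hcard : 2*s ≤ Fintype.card ι := by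
      have h2 := h.indep.fintype_card_le_finrank
      simp [Fintype.card_sum, finrank_pi] at h2
      omega
    by_cases heq : 2*s = Fintype.card ι
    · exact ⟨s, e, f, heq, le_refl s, h, fun i _ => rfl, fun i _ => rfl⟩
    · obtain ⟨w, h1⟩ := growStep hJu hJs h (by omega)
      obtain ⟨v, h2⟩ := pairStep hJu hJs h1
      obtain ⟨k, e', f', hk, hsk, h3, he', hf'⟩ :=
        ih (s+1) _ _ _ (by omega) h2
      refine ⟨k, e', f', hk, by omega, adapted_congr_u h3, ?_, ?_⟩
      · intro i hi
        rw [he' i (by omega), Function.update_of_ne (Nat.ne_of_lt hi)]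
      · intro i hi
        rw [hf' i (by omega), Function.update_of_ne (Nat.ne_of_lt hi)]

/-- the standard alternating gram pattern -/
def pat (s t : ℕ) : (Fin s ⊕ Fin s ⊕ Fin t) → (Fin s ⊕ Fin s ⊕ Fin t) → ℂ
  | .inl i, .inr (.inl j) => if i = j then 1 else 0
  | .inr (.inl i), .inl j => if i = j then -1 else 0
  | _, _ => 0

lemma adb : ∀ (N : ℕ) (V : Type u) [AddCommGroup V] [Module ℂ V] [FiniteDimensional ℂ V],
    finrank ℂ V = N → ∀ (B : V →ₗ[ℂ] V →ₗ[ℂ] ℂ), (∀ v, B v v = 0) →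
    ∃ (s t : ℕ) (x : (Fin s ⊕ Fin s ⊕ Fin t) → V), span ℂ (Set.range x) = ⊤ ∧ 2*s + t = N ∧
      (∀ p q, B (x p) (x q) = pat s t p q) := by
  intro N
  induction N using Nat.strong_induction_on with
  | _ N ih =>
  intro V _ _ _ hN B halt
  have hskew : ∀ v w : V, B v w = - B w v := by
    intro v w
    have h1 := halt (v + w)
    simp only [map_add, LinearMap.add_apply] at h1
    have h2 := halt v
    have h3 := halt w
    linear_combination h1 - h2 - h3
  by_cases hzero : ∀ v w : V, B v w = 0
  · -- the form is zero
    refine ⟨0, N, Sum.elim Fin.elim0 (Sum.elim Fin.elim0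
      ((Module.finBasis ℂ V).reindex (finCongr hN))), ?_, by omega, ?_⟩
    · have hr : Set.range (Sum.elim (Fin.elim0 : Fin 0 → V) (Sum.elim Fin.elim0
          ((Module.finBasis ℂ V).reindex (finCongr hN)))) =
          Set.range ((Module.finBasis ℂ V).reindex (finCongr hN)) := by
        simp [Sum.elim_range]
      rw [hr]
      exact Basis.span_eq _
    · intro p q
      rcases p with i | i | j
      · exact i.elim0
      · exact i.elim0
      rcases q with i' | i' | j'
      · exact i'.elim0
      · exact i'.elim0
      · rw [hzero]; rfl
  · -- there is a nonzero pair
    push_neg at hzero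
    obtain ⟨v, w0, hvw0⟩ := hzero
    set w : V := (B v w0)⁻¹ • w0 with hw
    have hvw1 : B v w = 1 := by
      rw [hw, _root_.map_smul, smul_eq_mul]
      exact inv_mul_cancel₀ hvw0
    have hBwv : B w v = -1 := by rw [hskew w v, hvw1]
    set W : Submodule ℂ V := (LinearMap.ker (B v)) ⊓ (LinearMap.ker (B w)) with hW
    have hmemW : ∀ z : V, z ∈ W ↔ B v z = 0 ∧ B w z = 0 := by
      intro z
      simp [hW, Submodule.mem_inf, LinearMap.mem_ker]
    have hdecomp : ∀ z : V, z - (B v z) • w + (B w z) • v ∈ W := by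
      intro z
      rw [hmemW]
      constructor
      · simp only [map_sub, map_add, _root_.map_smul, smul_eq_mul]
        rw [hvw1, halt v]
        ring
      · simp only [map_sub, map_add, _root_.map_smul, smul_eq_mul]
        rw [halt w, hBwv]
        ring
    have hindep2 : LinearIndependent ℂ ![v, w] := by
      rw [Fintype.linearIndependent_iff]
      intro g hg
      have h1 : B v (g 0 • v + g 1 • w) = g 1 := by
        simp only [map_add, _root_.map_smul, smul_eq_mul]
        rw [halt v, hvw1]; ring
      have h2 : B w (g 0 • v + g 1 • w) = - g 0 := by
        simp only [map_add, _root_.map_smul, smul_eq_mul]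
        rw [halt w, hBwv]; ring
      rw [Fin.sum_univ_two] at hg
      simp only [Matrix.cons_val_zero, Matrix.cons_val_one, Matrix.head_cons] at hg
      rw [hg] at h1 h2
      simp only [map_zero] at h1 h2
      intro i
      fin_cases i
      · simpa using h2.symm
      · exact h1.symm
    set sp : Submodule ℂ V := span ℂ (Set.range ![v, w]) with hsp
    have hrange2 : Set.range ![v, w] = {v, w} := by
      ext z
      constructor
      · rintro ⟨i, rfl⟩
        fin_cases i
        · left; rfl
        · right; rfl
      · rintro (rfl | rfl)
        · exact ⟨0, rfl⟩
        · exact ⟨1, rfl⟩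
    have hsup : sp ⊔ W = ⊤ := by
      rw [eq_top_iff]
      intro z _
      have hp : (B v z) • w - (B w z) • v ∈ sp := by
        apply Submodule.sub_mem
        · exact Submodule.smul_mem _ _ (Submodule.subset_span ⟨1, rfl⟩)
        · exact Submodule.smul_mem _ _ (Submodule.subset_span ⟨0, rfl⟩)
      apply Submodule.mem_sup.mpr
      exact ⟨_, hp, _, hdecomp z, by abel⟩
    have hdis : sp ⊓ W = ⊥ := by
      rw [eq_bot_iff]
      intro z hz
      obtain ⟨hz1, hz2⟩ := Submodule.mem_inf.mp hz
      rw [hsp, hrange2] at hz1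
      obtain ⟨a, b, hab⟩ := Submodule.mem_span_pair.mp hz1
      obtain ⟨hzv, hzw⟩ := (hmemW z).mp hz2
      have hb : b = 0 := by
        rw [← hab] at hzv
        simp only [map_add, _root_.map_smul, smul_eq_mul] at hzv
        rw [halt v, hvw1] at hzv
        linear_combination hzv
      have ha : a = 0 := by
        rw [← hab] at hzw
        simp only [map_add, _root_.map_smul, smul_eq_mul] at hzw
        rw [halt w, hBwv] at hzw
        linear_combination -hzw
      rw [← hab, ha, hb]
      simp
    have hfrsp : finrank ℂ sp = 2 := by
      rw [hsp, finrank_span_eq_card hindep2]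
      simp
    have hfrW : finrank ℂ W + 2 = N := by
      have := Submodule.finrank_sup_add_finrank_inf_eq sp W
      rw [hsup, hdis, hfrsp] at this
      rw [finrank_top, hN] at this
      simp at this
      omega
    -- apply the induction hypothesis to W
    obtain ⟨s, t, y, hyspan, hycard, hypat⟩ := ih (finrank ℂ W) (by omega) W rfl
      (B.domRestrict₁₂ W W) (fun z => halt z)
    -- assemble
    set xe : Fin (s+1) → V := Fin.snoc (fun i : Fin s => (y (Sum.inl i) : V)) v with hxe
    set xf : Fin (s+1) → V := Fin.snoc (fun i : Fin s => (y (Sum.inr (Sum.inl i)) : V)) w with hxf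
    set xu : Fin t → V := fun j => (y (Sum.inr (Sum.inr j)) : V) with hxu
    set x : (Fin (s+1) ⊕ Fin (s+1) ⊕ Fin t) → V := Sum.elim xe (Sum.elim xf xu) with hx
    have hyW : ∀ p, (y p : V) ∈ W := fun p => (y p).2
    have hyker : ∀ z : V, z ∈ W → B v z = 0 ∧ B w z = 0 := fun z hz => (hmemW z).mp hz
    have hpatval : ∀ p q, B (y p : V) (y q : V) = pat s t p q := by
      intro p q
      have := hypat p q
      simpa [LinearMap.domRestrict₁₂_apply] using this
    refine ⟨s+1, t, x, ?_, by omega, ?_⟩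
    · -- spanning
      rw [eq_top_iff, ← hsup]
      apply sup_le
      · rw [hsp]
        apply span_le.mpr
        rintro z ⟨i, rfl⟩
        fin_cases i
        · apply Submodule.subset_span
          exact ⟨Sum.inl (Fin.last s), by simp [hx, hxe, Fin.snoc_last]⟩
        · apply Submodule.subset_span
          exact ⟨Sum.inr (Sum.inl (Fin.last s)), by simp [hx, hxf, Fin.snoc_last]⟩
      · intro z hz
        have hz' : (⟨z, hz⟩ : W) ∈ span ℂ (Set.range y) := by rw [hyspan]; trivial
        have himg : z ∈ Submodule.map W.subtype (span ℂ (Set.range y)) :=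
          ⟨⟨z, hz⟩, hz', rfl⟩
        rw [Submodule.map_span] at himg
        refine span_le.mpr ?_ himg
        rintro _ ⟨_, ⟨p, rfl⟩, rfl⟩
        apply Submodule.subset_span
        rcases p with i | i | j
        · exact ⟨Sum.inl i.castSucc, by simp [hx, hxe, Fin.snoc_castSucc]⟩
        · exact ⟨Sum.inr (Sum.inl i.castSucc), by simp [hx, hxf, Fin.snoc_castSucc]⟩
        · exact ⟨Sum.inr (Sum.inr j), rfl⟩
    · -- the gram pattern
      intro p q
      rcases p with i | i | j <;> rcases q with i' | i' | j'
      · -- (e, e)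
        induction i using Fin.lastCases with
        | last =>
          induction i' using Fin.lastCases with
          | last => simp [hx, hxe, Fin.snoc_last, halt, pat]
          | cast i' =>
            simp only [hx, hxe, Sum.elim_inl, Fin.snoc_last, Fin.snoc_castSucc]
            rw [(hyker _ (hyW (Sum.inl i'))).1]
            rfl
        | cast i =>
          induction i' using Fin.lastCases with
          | last =>
            simp only [hx, hxe, Sum.elim_inl, Fin.snoc_last, Fin.snoc_castSucc]
            rw [hskew, (hyker _ (hyW (Sum.inl i))).1, neg_zero]
            rfl
          | cast i' =>
            simp only [hx, hxe, Sum.elim_inl, Fin.snoc_castSucc]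
            rw [hpatval (Sum.inl i) (Sum.inl i')]
            rfl
      · -- (e, f)
        induction i using Fin.lastCases with
        | last =>
          induction i' using Fin.lastCases with
          | last => simp [hx, hxe, hxf, Fin.snoc_last, hvw1, pat]
          | cast i' =>
            simp only [hx, hxe, hxf, Sum.elim_inl, Sum.elim_inr, Fin.snoc_last,
              Fin.snoc_castSucc]
            rw [(hyker _ (hyW (Sum.inr (Sum.inl i')))).1]
            show (0:ℂ) = if Fin.last s = i'.castSucc then 1 else 0
            rw [if_neg (by simp [Fin.ext_iff]; omega)]
        | cast i =>
          induction i' using Fin.lastCases with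
          | last =>
            simp only [hx, hxe, hxf, Sum.elim_inl, Sum.elim_inr, Fin.snoc_last,
              Fin.snoc_castSucc]
            rw [hskew, (hyker _ (hyW (Sum.inl i))).2, neg_zero]
            show (0:ℂ) = if i.castSucc = Fin.last s then 1 else 0
            rw [if_neg (by simp [Fin.ext_iff]; omega)]
          | cast i' =>
            simp only [hx, hxe, hxf, Sum.elim_inl, Sum.elim_inr, Fin.snoc_castSucc]
            rw [hpatval (Sum.inl i) (Sum.inr (Sum.inl i'))]
            show (if i = i' then (1:ℂ) else 0) = if i.castSucc = i'.castSucc then 1 else 0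
            simp [Fin.castSucc_inj]
      · -- (e, u)
        induction i using Fin.lastCases with
        | last =>
          simp only [hx, hxe, hxu, Sum.elim_inl, Sum.elim_inr, Fin.snoc_last]
          rw [(hyker _ (hyW (Sum.inr (Sum.inr j')))).1]
          rfl
        | cast i =>
          simp only [hx, hxe, hxu, Sum.elim_inl, Sum.elim_inr, Fin.snoc_castSucc]
          rw [hpatval (Sum.inl i) (Sum.inr (Sum.inr j'))]
          rfl
      · -- (f, e)
        induction i using Fin.lastCases with
        | last =>
          induction i' using Fin.lastCases with
          | last => simp [hx, hxe, hxf, Fin.snoc_last, hBwv, pat]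
          | cast i' =>
            simp only [hx, hxe, hxf, Sum.elim_inl, Sum.elim_inr, Fin.snoc_last,
              Fin.snoc_castSucc]
            rw [(hyker _ (hyW (Sum.inl i'))).2]
            show (0:ℂ) = if Fin.last s = i'.castSucc then -1 else 0
            rw [if_neg (by simp [Fin.ext_iff]; omega)]
        | cast i =>
          induction i' using Fin.lastCases with
          | last =>
            simp only [hx, hxe, hxf, Sum.elim_inl, Sum.elim_inr, Fin.snoc_last,
              Fin.snoc_castSucc]
            rw [hskew, (hyker _ (hyW (Sum.inr (Sum.inl i)))).1, neg_zero]
            show (0:ℂ) = if i.castSucc = Fin.last s then -1 else 0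
            rw [if_neg (by simp [Fin.ext_iff]; omega)]
          | cast i' =>
            simp only [hx, hxe, hxf, Sum.elim_inl, Sum.elim_inr, Fin.snoc_castSucc]
            rw [hpatval (Sum.inr (Sum.inl i)) (Sum.inl i')]
            show (if i = i' then (-1:ℂ) else 0) = if i.castSucc = i'.castSucc then -1 else 0
            simp [Fin.castSucc_inj]
      · -- (f, f)
        induction i using Fin.lastCases with
        | last =>
          induction i' using Fin.lastCases with
          | last => simp [hx, hxf, Fin.snoc_last, halt, pat]
          | cast i' =>
            simp only [hx, hxf, Sum.elim_inr, Sum.elim_inl, Fin.snoc_last, Fin.snoc_castSucc]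
            rw [(hyker _ (hyW (Sum.inr (Sum.inl i')))).2]
            rfl
        | cast i =>
          induction i' using Fin.lastCases with
          | last =>
            simp only [hx, hxf, Sum.elim_inr, Sum.elim_inl, Fin.snoc_last, Fin.snoc_castSucc]
            rw [hskew, (hyker _ (hyW (Sum.inr (Sum.inl i)))).2, neg_zero]
            rfl
          | cast i' =>
            simp only [hx, hxf, Sum.elim_inr, Sum.elim_inl, Fin.snoc_castSucc]
            rw [hpatval (Sum.inr (Sum.inl i)) (Sum.inr (Sum.inl i'))]
            rfl
      · -- (f, u)
        induction i using Fin.lastCases with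
        | last =>
          simp only [hx, hxf, hxu, Sum.elim_inr, Sum.elim_inl, Fin.snoc_last]
          rw [(hyker _ (hyW (Sum.inr (Sum.inr j')))).2]
          rfl
        | cast i =>
          simp only [hx, hxf, hxu, Sum.elim_inr, Sum.elim_inl, Fin.snoc_castSucc]
          rw [hpatval (Sum.inr (Sum.inl i)) (Sum.inr (Sum.inr j'))]
          rfl
      · -- (u, e)
        induction i' using Fin.lastCases with
        | last =>
          simp only [hx, hxe, hxu, Sum.elim_inl, Sum.elim_inr, Fin.snoc_last]
          rw [hskew, (hyker _ (hyW (Sum.inr (Sum.inr j)))).1, neg_zero]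
          rfl
        | cast i' =>
          simp only [hx, hxe, hxu, Sum.elim_inl, Sum.elim_inr, Fin.snoc_castSucc]
          rw [hpatval (Sum.inr (Sum.inr j)) (Sum.inl i')]
          rfl
      · -- (u, f)
        induction i' using Fin.lastCases with
        | last =>
          simp only [hx, hxf, hxu, Sum.elim_inr, Sum.elim_inl, Fin.snoc_last]
          rw [hskew, (hyker _ (hyW (Sum.inr (Sum.inr j)))).2, neg_zero]
          rfl
        | cast i' =>
          simp only [hx, hxf, hxu, Sum.elim_inr, Sum.elim_inl, Fin.snoc_castSucc]
          rw [hpatval (Sum.inr (Sum.inr j)) (Sum.inr (Sum.inl i'))]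
          rfl
      · -- (u, u)
        simp only [hx, hxu, Sum.elim_inr]
        rw [hpatval (Sum.inr (Sum.inr j)) (Sum.inr (Sum.inr j'))]
        rfl

/-- the standard nondegenerate pattern on `Fin k ⊕ Fin k` -/
def PK (k : ℕ) : Matrix (Fin k ⊕ Fin k) (Fin k ⊕ Fin k) ℂ :=
  of fun p q => match p, q with
    | .inl i, .inr j => if i = j then 1 else 0
    | .inr i, .inl j => if i = j then -1 else 0
    | _, _ => 0

lemma PK_mul_neg_PK (k : ℕ) : PK k * (-1 • PK k) = 1 := by
  ext p q
  rcases p with i | i <;> rcases q with j | j <;>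
    simp only [PK, Matrix.mul_apply, Fintype.sum_sum_type, Matrix.smul_apply,
      Matrix.one_apply, Matrix.of_apply, smul_eq_mul] <;>
    simp [mul_ite, ite_mul, Finset.sum_ite_eq, Finset.sum_ite_eq', eq_comm] <;>
    split_ifs <;> ring

lemma isUnit_PK (k : ℕ) : IsUnit (PK k) := by
  have h := congrArg Matrix.det (PK_mul_neg_PK k)
  rw [Matrix.det_mul, Matrix.det_one] at h
  exact (Matrix.isUnit_iff_isUnit_det _).mpr (IsUnit.of_mul_eq_one _ h)

/-- rank of a product with a surjective right factor -/
lemma rank_mul_of_surj {α β γ : Type*} [Fintype α] [Fintype β] [Fintype γ]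
    (M : Matrix α β ℂ) (X : Matrix β γ ℂ) (hX : Function.Surjective X.mulVecLin) :
    (M * X).rank = M.rank := by
  unfold Matrix.rank
  rw [mulVecLin_mul, LinearMap.range_comp, LinearMap.range_eq_top.mpr hX, Submodule.map_top]

/-- rank of a product with an injective left factor -/
lemma rank_mul_of_inj {α β γ : Type*} [Fintype α] [Fintype β] [Fintype γ]
    (Y : Matrix α β ℂ) (M : Matrix β γ ℂ) (hY : Function.Injective Y.mulVecLin) :
    (Y * M).rank = M.rank := by
  unfold Matrix.rank
  rw [mulVecLin_mul, LinearMap.range_comp]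
  exact (LinearEquiv.finrank_eq (Submodule.equivMapOfInjective _ hY _)).symm

/-- rank of the pattern matrix -/
lemma rank_pat (s t : ℕ) : (of (pat s t) : Matrix _ _ ℂ).rank = 2 * s := by
  classical
  have hsub : (of (pat s t) : Matrix _ _ ℂ) =
      (fromBlocks (PK s) 0 0 (0 : Matrix (Fin t) (Fin t) ℂ)).submatrix
        (Equiv.sumAssoc (Fin s) (Fin s) (Fin t)).symm
        (Equiv.sumAssoc (Fin s) (Fin s) (Fin t)).symm := by
    ext p q
    rcases p with i | i | j <;> rcases q with i' | i' | j' <;> rfl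
  rw [hsub, Matrix.rank_submatrix]
  have hprod : fromBlocks (PK s) 0 0 (0 : Matrix (Fin t) (Fin t) ℂ)
      = fromBlocks 1 0 0 0 * fromBlocks (PK s) 0 0 (1 : Matrix (Fin t) (Fin t) ℂ) := by
    rw [Matrix.fromBlocks_multiply]
    simp
  rw [hprod]
  have hdet : IsUnit (fromBlocks (PK s) 0 0 (1 : Matrix (Fin t) (Fin t) ℂ)).det := by
    rw [Matrix.det_fromBlocks_zero₂₁]
    simp only [Matrix.det_one, mul_one]
    exact (Matrix.isUnit_iff_isUnit_det _).mp (isUnit_PK s)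
  rw [Matrix.rank_mul_eq_left_of_isUnit_det _ _ hdet]
  have hdiag : (fromBlocks 1 0 0 0 : Matrix ((Fin s ⊕ Fin s) ⊕ Fin t) _ ℂ)
      = Matrix.diagonal (Sum.elim (fun _ => (1:ℂ)) (fun _ => (0:ℂ))) := by
    rw [← Matrix.fromBlocks_diagonal]
    congr 1 <;> simp
  rw [hdiag, Matrix.rank_diagonal]
  have e : {p : (Fin s ⊕ Fin s) ⊕ Fin t //
      Sum.elim (fun _ => (1:ℂ)) (fun _ => (0:ℂ)) p ≠ 0} ≃ (Fin s ⊕ Fin s) :=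
    { toFun := fun x => match x with
        | ⟨.inl a, _⟩ => a
        | ⟨.inr b, h⟩ => absurd rfl h
      invFun := fun a => ⟨.inl a, one_ne_zero⟩
      left_inv := fun x => by
        rcases x with ⟨p, h⟩
        rcases p with a | b
        · rfl
        · exact absurd rfl h
      right_inv := fun a => rfl }
  rw [Fintype.card_congr e]
  simp [Fintype.card_sum]
  omega

/-- two matrices with equal column space differ by a right `GL_m` factor -/
lemma factor_of_range_eq {α : Type*} [Fintype α] [DecidableEq α] {m : ℕ}
    (M N : Matrix α (Fin m) ℂ) (h : LinearMap.range M.mulVecLin = LinearMap.range N.mulVecLin) :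
    ∃ H : Matrix (Fin m) (Fin m) ℂ, IsUnit H ∧ M = N * H := by
  classical
  set f := M.mulVecLin
  set g := N.mulVecLin
  obtain ⟨C₁, hC₁⟩ := Submodule.exists_isCompl (LinearMap.ker f)
  obtain ⟨C₂, hC₂⟩ := Submodule.exists_isCompl (LinearMap.ker g)
  have hkerdim : finrank ℂ (LinearMap.ker f) = finrank ℂ (LinearMap.ker g) := by
    have h1 := LinearMap.finrank_range_add_finrank_ker f
    have h2 := LinearMap.finrank_range_add_finrank_ker g
    rw [h] at h1
    omega
  -- restriction of f to C₁ is injective with range = range f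
  have hres : ∀ (q : Submodule ℂ (Fin m → ℂ)) (φ : (Fin m → ℂ) →ₗ[ℂ] (α → ℂ)),
      IsCompl (LinearMap.ker φ) q →
      ∃ ψ : q ≃ₗ[ℂ] LinearMap.range φ, ∀ c : q, (ψ c : α → ℂ) = φ c := by
    intro q φ hq
    have hinj : Function.Injective (φ.domRestrict q) := by
      rw [← LinearMap.ker_eq_bot]
      rw [LinearMap.ker_eq_bot']
      intro c hc
      have : (c : Fin m → ℂ) ∈ LinearMap.ker φ ⊓ q := ⟨hc, c.2⟩
      rw [hq.inf_eq_bot] at this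
      exact Subtype.ext this
    have hrange : LinearMap.range (φ.domRestrict q) = LinearMap.range φ := by
      apply le_antisymm
      · rintro _ ⟨c, rfl⟩; exact ⟨c, rfl⟩
      · rintro _ ⟨z, rfl⟩
        obtain ⟨zk, zc, hzk, hzc, rfl⟩ := Submodule.codisjoint_iff_exists_add_eq.mp hq.codisjoint z
        refine ⟨⟨zc, hzc⟩, ?_⟩
        simp only [LinearMap.domRestrict_apply, map_add]
        rw [LinearMap.mem_ker.mp hzk, zero_add]
    exact ⟨(LinearEquiv.ofInjective _ hinj).trans (LinearEquiv.ofEq _ _ hrange),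
      fun c => rfl⟩
  obtain ⟨ψ₁, hψ₁⟩ := hres C₁ f hC₁
  obtain ⟨ψ₂, hψ₂⟩ := hres C₂ g hC₂
  set τ : C₁ ≃ₗ[ℂ] C₂ := ψ₁.trans ((LinearEquiv.ofEq _ _ h).trans ψ₂.symm)
  have hτ : ∀ c : C₁, g (τ c) = f c := by
    intro c
    have : (ψ₂ (τ c) : α → ℂ) = g (τ c) := hψ₂ _
    rw [← this]
    show ((ψ₂ (ψ₂.symm ((LinearEquiv.ofEq _ _ h) (ψ₁ c)))) : α → ℂ) = f c
    rw [LinearEquiv.apply_symm_apply]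
    show ((ψ₁ c : α → ℂ)) = f c
    exact hψ₁ c
  set σ : (LinearMap.ker f) ≃ₗ[ℂ] (LinearMap.ker g) := LinearEquiv.ofFinrankEq _ _ hkerdim
  set φ : (Fin m → ℂ) ≃ₗ[ℂ] (Fin m → ℂ) :=
    ((Submodule.prodEquivOfIsCompl _ _ hC₁).symm.trans (σ.prodCongr τ)).trans
      (Submodule.prodEquivOfIsCompl _ _ hC₂)
  have hφ : ∀ z, g (φ z) = f z := by
    have hext : g.comp (φ : (Fin m → ℂ) →ₗ[ℂ] (Fin m → ℂ)) = f := by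
      apply LinearMap.ext_on_codisjoint hC₁.codisjoint
      · intro z hz
        simp only [LinearMap.comp_apply]
        have hφz : φ z = σ ⟨z, hz⟩ := by
          show (Submodule.prodEquivOfIsCompl _ _ hC₂) ((σ.prodCongr τ)
            ((Submodule.prodEquivOfIsCompl _ _ hC₁).symm z)) = _
          rw [show (Submodule.prodEquivOfIsCompl _ _ hC₁).symm z = (⟨z, hz⟩, 0) from ?_]
          · simp [Submodule.coe_prodEquivOfIsCompl']
          · apply (Submodule.prodEquivOfIsCompl _ _ hC₁).injective
            rw [LinearEquiv.apply_symm_apply]; simp [Submodule.coe_prodEquivOfIsCompl']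
        show g (φ z) = f z
        rw [hφz]
        rw [LinearMap.mem_ker.mp hz]
        exact LinearMap.mem_ker.mp (σ ⟨z, hz⟩).2
      · intro z hz
        simp only [LinearMap.comp_apply]
        have hφz : φ z = τ ⟨z, hz⟩ := by
          show (Submodule.prodEquivOfIsCompl _ _ hC₂) ((σ.prodCongr τ)
            ((Submodule.prodEquivOfIsCompl _ _ hC₁).symm z)) = _
          rw [show (Submodule.prodEquivOfIsCompl _ _ hC₁).symm z = (0, ⟨z, hz⟩) from ?_]
          · simp [Submodule.coe_prodEquivOfIsCompl']
          · apply (Submodule.prodEquivOfIsCompl _ _ hC₁).injective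
            rw [LinearEquiv.apply_symm_apply]; simp [Submodule.coe_prodEquivOfIsCompl']
        show g (φ z) = f z
        rw [hφz, hτ ⟨z, hz⟩]
    intro z
    have := LinearMap.congr_fun hext z
    simpa using this
  set H : Matrix (Fin m) (Fin m) ℂ := LinearMap.toMatrix' (φ : (Fin m → ℂ) →ₗ[ℂ] (Fin m → ℂ))
    with hH
  have hHlin : H.mulVecLin = (φ : (Fin m → ℂ) →ₗ[ℂ] (Fin m → ℂ)) := by
    apply LinearMap.ext
    intro v
    rw [Matrix.mulVecLin_apply, ← Matrix.toLin'_apply, hH, Matrix.toLin'_toMatrix']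
  have hunit : IsUnit H := by
    have hone : H * LinearMap.toMatrix' (φ.symm : (Fin m → ℂ) →ₗ[ℂ] (Fin m → ℂ)) = 1 := by
      rw [hH, ← LinearMap.toMatrix'_comp]
      have : ((φ : (Fin m → ℂ) →ₗ[ℂ] (Fin m → ℂ)).comp
          (φ.symm : (Fin m → ℂ) →ₗ[ℂ] (Fin m → ℂ))) = LinearMap.id := by
        ext z
        simp
      rw [this, LinearMap.toMatrix'_id]
    have h := congrArg Matrix.det hone
    rw [Matrix.det_mul, Matrix.det_one] at h
    exact (Matrix.isUnit_iff_isUnit_det _).mpr (IsUnit.of_mul_eq_one _ h)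
  refine ⟨H, hunit, ?_⟩
  have hMN : M.mulVecLin = (N * H).mulVecLin := by
    rw [Matrix.mulVecLin_mul, hHlin]
    apply LinearMap.ext
    intro z
    exact (hφ z).symm
  ext i j
  have := congrFun (congrArg (fun (l : (Fin m → ℂ) →ₗ[ℂ] (α → ℂ)) => l (Pi.single j 1)) hMN) i
  simpa [Matrix.mulVecLin_apply, Matrix.mulVec_single, Matrix.mul_apply, Matrix.mulVec, dotProduct, Matrix.col_apply, Pi.single_apply] using this

/-- gram entries of `Wᵀ * J * W` -/
lemma gram_entry {J : Matrix ι ι ℂ} {κ : Type*} [Fintype κ] (W : Matrix ι κ ℂ) (p q : κ) :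
    (Wᵀ * J * W) p q = om J (fun r => W r p) (fun r => W r q) := by
  have lhs : (Wᵀ * J * W) p q = ∑ c, (∑ i, W i p * J i c) * W c q := by
    simp [Matrix.mul_apply, Matrix.transpose_apply]
  have rhs : om J (fun r => W r p) (fun r => W r q) = ∑ i, W i p * (∑ c, J i c * W c q) := by
    simp [om, dotProduct, Matrix.mulVec]
  rw [lhs, rhs]
  simp only [Finset.sum_mul]
  rw [Finset.sum_comm]
  refine Finset.sum_congr rfl fun i _ => ?_
  rw [Finset.mul_sum]
  refine Finset.sum_congr rfl fun c _ => ?_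
  ring

/-- the index-matching equivalence -/
noncomputable def sig (ι : Type*) [Fintype ι] [DecidableEq ι] (k : ℕ)
    (h : Fintype.card ι = 2*k) : ι ≃ (Fin k ⊕ Fin k) :=
  Fintype.equivOfCardEq (by simp [Fintype.card_sum, h]; omega)

noncomputable def stdP (J : Matrix ι ι ℂ) (k : ℕ) (h : Fintype.card ι = 2*k) : Matrix ι ι ℂ :=
  (PK k).submatrix (sig ι k h) (sig ι k h)

def selFam (s t k : ℕ) (hst : s+t ≤ k) : (Fin s ⊕ Fin s ⊕ Fin t) → (Fin k ⊕ Fin k)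
  | .inl i => .inl (Fin.castLE (by omega) i)
  | .inr (.inl i) => .inr (Fin.castLE (by omega) i)
  | .inr (.inr j) => .inl ⟨s+j, by omega⟩

lemma construct {J : Matrix ι ι ℂ} (hJu : IsUnit J) (hJs : Jᵀ = -J) {m : ℕ}
    (M : Matrix ι (Fin m) ℂ) :
    ∃ (s t k : ℕ) (hk : Fintype.card ι = 2*k) (hst : s+t ≤ k) (Q : Matrix ι ι ℂ),
      IsUnit Q ∧ Qᵀ * J * Q = stdP J k hk ∧
      LinearMap.range M.mulVecLin =
        span ℂ (Set.range (fun p => fun r => Q r ((sig ι k hk).symm (selFam s t k hst p)))) ∧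
      M.rank = 2*s+t ∧ (Mᵀ * J * M).rank = 2*s := by
  classical
  set V := LinearMap.range M.mulVecLin with hV
  set B := (omL J).domRestrict₁₂ V V with hB
  have halt : ∀ v : V, B v v = 0 := fun v => by
    simp only [hB, LinearMap.domRestrict₁₂_apply, omL_apply]
    exact om_self hJs _
  obtain ⟨s, t, x, hspan, hcard, hpx⟩ := adb (finrank ℂ V) V rfl B halt
  have hpat : ∀ p q, om J (x p : ι → ℂ) (x q : ι → ℂ) = pat s t p q := by
    intro p q
    have := hpx p q
    simpa [hB, LinearMap.domRestrict₁₂_apply] using this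
  have hxindep : LinearIndependent ℂ x := by
    apply linearIndependent_of_top_le_span_of_card_eq_finrank hspan.ge
    simp [Fintype.card_sum]
    omega
  set xc : (Fin s ⊕ Fin s ⊕ Fin t) → (ι → ℂ) := fun p => (x p : ι → ℂ) with hxc
  have hxcindep : LinearIndependent ℂ xc := hxindep.map' V.subtype (Submodule.ker_subtype V)
  -- the span of xc is V
  have hVspan : V = span ℂ (Set.range xc) := by
    have h1 : V = Submodule.map V.subtype ⊤ := by rw [Submodule.map_subtype_top]
    rw [h1, ← hspan, Submodule.map_span]
    congr 1
    rw [← Set.range_comp]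
    rfl
  -- convert to an adapted family
  set e : ℕ → ι → ℂ := fun i => if h : i < s then xc (Sum.inl ⟨i, h⟩) else 0 with he
  set f : ℕ → ι → ℂ := fun i => if h : i < s then xc (Sum.inr (Sum.inl ⟨i, h⟩)) else 0 with hf
  set u : ℕ → ι → ℂ := fun j => if h : j < t then xc (Sum.inr (Sum.inr ⟨j, h⟩)) else 0 with hu
  have hcombeq : comb s t e f u = xc := by
    funext p
    rcases p with i | i | j
    · simp only [comb, Sum.elim_inl, he, i.isLt, dif_pos]
    · simp only [comb, Sum.elim_inr, Sum.elim_inl, hf, i.isLt, dif_pos]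
    · simp only [comb, Sum.elim_inr, hu, j.isLt, dif_pos]
  have hadapt : Adapted J s t e f u := by
    constructor
    · rw [hcombeq]; exact hxcindep
    · intro i j hi hj
      rw [he]
      simp only [dif_pos hi, dif_pos hj]
      rw [show xc (Sum.inl ⟨i, hi⟩) = x (Sum.inl ⟨i, hi⟩) from rfl,
        show xc (Sum.inl ⟨j, hj⟩) = x (Sum.inl ⟨j, hj⟩) from rfl, hpat]
      rfl
    · intro i j hi hj
      rw [hf]
      simp only [dif_pos hi, dif_pos hj]
      rw [show xc (Sum.inr (Sum.inl ⟨i, hi⟩)) = x (Sum.inr (Sum.inl ⟨i, hi⟩)) from rfl,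
        show xc (Sum.inr (Sum.inl ⟨j, hj⟩)) = x (Sum.inr (Sum.inl ⟨j, hj⟩)) from rfl, hpat]
      rfl
    · intro i j hi hj
      rw [he, hf]
      simp only [dif_pos hi, dif_pos hj]
      rw [show xc (Sum.inl ⟨i, hi⟩) = x (Sum.inl ⟨i, hi⟩) from rfl,
        show xc (Sum.inr (Sum.inl ⟨j, hj⟩)) = x (Sum.inr (Sum.inl ⟨j, hj⟩)) from rfl, hpat]
      show (if (⟨i, hi⟩ : Fin s) = ⟨j, hj⟩ then (1:ℂ) else 0) = if i = j then 1 else 0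
      simp [Fin.ext_iff]
    · intro i j hi hj
      rw [he, hu]
      simp only [dif_pos hi, dif_pos hj]
      rw [show xc (Sum.inl ⟨i, hi⟩) = x (Sum.inl ⟨i, hi⟩) from rfl,
        show xc (Sum.inr (Sum.inr ⟨j, hj⟩)) = x (Sum.inr (Sum.inr ⟨j, hj⟩)) from rfl, hpat]
      rfl
    · intro i j hi hj
      rw [hf, hu]
      simp only [dif_pos hi, dif_pos hj]
      rw [show xc (Sum.inr (Sum.inl ⟨i, hi⟩)) = x (Sum.inr (Sum.inl ⟨i, hi⟩)) from rfl,
        show xc (Sum.inr (Sum.inr ⟨j, hj⟩)) = x (Sum.inr (Sum.inr ⟨j, hj⟩)) from rfl, hpat]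
      rfl
    · intro i j hi hj
      rw [hu]
      simp only [dif_pos hi, dif_pos hj]
      rw [show xc (Sum.inr (Sum.inr ⟨i, hi⟩)) = x (Sum.inr (Sum.inr ⟨i, hi⟩)) from rfl,
        show xc (Sum.inr (Sum.inr ⟨j, hj⟩)) = x (Sum.inr (Sum.inr ⟨j, hj⟩)) from rfl, hpat]
      rfl
  -- pair everything and complete to a full symplectic family
  obtain ⟨e1, f1, had1, hpe1, hpf1, hpu1⟩ := pairAll hJu hJs t s e f u hadapt
  obtain ⟨k, e', f', hk2, hsk, had2, hpe2, hpf2⟩ :=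
    completion hJu hJs (Fintype.card ι) (s+t) e1 f1 u (by omega) had1
  have hk : Fintype.card ι = 2*k := hk2.symm
  have hst : s + t ≤ k := hsk
  set bigcol : (Fin k ⊕ Fin k) → (ι → ℂ) :=
    Sum.elim (fun a => e' ↑a) (fun b => f' ↑b) with hbigcol
  set Q : Matrix ι ι ℂ := of (fun r c => bigcol (sig ι k hk c) r) with hQ
  have hQcol : ∀ c : ι, (fun r => Q r c) = bigcol (sig ι k hk c) := fun c => rfl
  -- the gram matrix of the big family
  have hbigpat : ∀ p q, om J (bigcol p) (bigcol q) = PK k p q := by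
    intro p q
    rcases p with a | a <;> rcases q with b | b
    · rw [hbigcol]
      simp only [Sum.elim_inl]
      rw [had2.hee a b a.isLt b.isLt]
      rfl
    · rw [hbigcol]
      simp only [Sum.elim_inl, Sum.elim_inr]
      rw [had2.hef a b a.isLt b.isLt]
      show (if (a:ℕ) = (b:ℕ) then (1:ℂ) else 0) = PK k (Sum.inl a) (Sum.inr b)
      show _ = if a = b then (1:ℂ) else 0
      simp [Fin.ext_iff]
    · rw [hbigcol]
      simp only [Sum.elim_inl, Sum.elim_inr]
      rw [om_skew hJs, had2.hef b a b.isLt a.isLt]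
      show -(if (b:ℕ) = (a:ℕ) then (1:ℂ) else 0) = PK k (Sum.inr a) (Sum.inl b)
      show _ = if a = b then (-1:ℂ) else 0
      by_cases hab : a = b
      · subst hab; simp
      · rw [if_neg hab, if_neg (by simp [Fin.ext_iff] at hab ⊢; omega), neg_zero]
    · rw [hbigcol]
      simp only [Sum.elim_inr]
      rw [had2.hff a b a.isLt b.isLt]
      rfl
  have hQgram : Qᵀ * J * Q = stdP J k hk := by
    ext a b
    rw [gram_entry, hQcol, hQcol, hbigpat]
    rfl
  -- Q is invertible
  have hQunit : IsUnit Q := by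
    have hdet := congrArg Matrix.det hQgram
    rw [Matrix.det_mul, Matrix.det_mul, Matrix.det_transpose] at hdet
    have hstd : IsUnit (stdP J k hk).det := by
      rw [stdP, Matrix.det_submatrix_equiv_self]
      exact (Matrix.isUnit_iff_isUnit_det _).mp (isUnit_PK k)
    rw [← hdet] at hstd
    rw [Matrix.isUnit_iff_isUnit_det]
    exact isUnit_of_mul_isUnit_right hstd
  -- selected columns are the original adapted family
  have hsel : ∀ p, (fun r => Q r ((sig ι k hk).symm (selFam s t k hst p))) = xc p := by
    intro p
    rw [hQcol, Equiv.apply_symm_apply]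
    rcases p with i | i | j
    · show bigcol (Sum.inl (Fin.castLE (by omega) i)) = xc (Sum.inl i)
      rw [hbigcol]
      simp only [Sum.elim_inl, Fin.coe_castLE]
      rw [hpe2 ↑i (by omega), hpe1 ↑i i.isLt, he]
      simp only [dif_pos i.isLt]
    · show bigcol (Sum.inr (Fin.castLE (by omega) i)) = xc (Sum.inr (Sum.inl i))
      rw [hbigcol]
      simp only [Sum.elim_inr, Fin.coe_castLE]
      rw [hpf2 ↑i (by omega), hpf1 ↑i i.isLt, hf]
      simp only [dif_pos i.isLt]
    · show bigcol (Sum.inl ⟨s+↑j, by omega⟩) = xc (Sum.inr (Sum.inr j))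
      rw [hbigcol]
      simp only [Sum.elim_inl]
      rw [hpe2 (s+↑j) (by omega), hpu1 ↑j j.isLt, hu]
      simp only [dif_pos j.isLt]
  -- rank of M
  have hrankM : M.rank = 2*s+t := by
    rw [Matrix.rank, ← hV]
    omega
  -- the K-X factorization
  set K : Matrix ι (Fin s ⊕ Fin s ⊕ Fin t) ℂ := of (fun r p => xc p r) with hK
  have hKgram : Kᵀ * J * K = of (pat s t) := by
    ext p q
    rw [gram_entry]
    show om J (xc p) (xc q) = _
    rw [hxc, hpat]
    rfl
  have hcolM : ∀ j, (fun i => M i j) ∈ V := by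
    intro j
    rw [hV]
    refine ⟨Pi.single j 1, ?_⟩
    rw [Matrix.mulVecLin_apply]
    funext i
    rw [Matrix.mulVec_single]
    exact mul_one _
  have hcolMK : ∀ j : Fin m, ∃ xv, K.mulVecLin xv = fun i => M i j := by
    intro j
    have h1 : (fun i => M i j) ∈ span ℂ (Set.range xc) := by rw [← hVspan]; exact hcolM j
    have h2 : LinearMap.range K.mulVecLin = span ℂ (Set.range xc) := by
      rw [Matrix.range_mulVecLin]
      congr 1
    rw [← h2] at h1
    exact h1
  set X : Matrix (Fin s ⊕ Fin s ⊕ Fin t) (Fin m) ℂ :=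
    of (fun p j => Classical.choose (hcolMK j) p) with hX
  have hMKX : M = K * X := by
    ext i j
    have := congrFun (Classical.choose_spec (hcolMK j)) i
    rw [Matrix.mulVecLin_apply] at this
    rw [← this]
    rfl
  have hrankX : X.rank = 2*s+t := by
    have hle : X.rank ≤ 2*s+t := by
      have h9 := X.rank_le_card_height
      simp [Fintype.card_sum] at h9
      omega
    have hge : 2*s+t ≤ X.rank := by
      rw [← hrankM, hMKX]
      exact Matrix.rank_mul_le_right K X
    omega
  have hXsurj : Function.Surjective X.mulVecLin := by
    rw [← LinearMap.range_eq_top]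
    apply Submodule.eq_top_of_finrank_eq
    rw [← Matrix.rank, hrankX, finrank_pi, Fintype.card_sum]
    simp
    omega
  have hXTinj : Function.Injective Xᵀ.mulVecLin := by
    rw [← LinearMap.ker_eq_bot]
    rw [← Submodule.finrank_eq_zero (R := ℂ)]
    have h1 := LinearMap.finrank_range_add_finrank_ker Xᵀ.mulVecLin
    have h2 : finrank ℂ (LinearMap.range Xᵀ.mulVecLin) = 2*s+t := by
      rw [← Matrix.rank, Matrix.rank_transpose, hrankX]
    rw [h2, finrank_pi, Fintype.card_sum] at h1
    simp at h1
    omega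
  have hMJM : Mᵀ * J * M = Xᵀ * ((of (pat s t) : Matrix _ _ ℂ) * X) := by
    rw [hMKX, Matrix.transpose_mul, ← hKgram]
    simp only [Matrix.mul_assoc]
  have hrankMJM : (Mᵀ * J * M).rank = 2*s := by
    rw [hMJM, rank_mul_of_inj _ _ hXTinj, rank_mul_of_surj _ _ hXsurj, rank_pat]
  have hfun : (fun p => fun r => Q r ((sig ι k hk).symm (selFam s t k hst p))) = xc :=
    funext hsel
  exact ⟨s, t, k, hk, hst, Q, hQunit, hQgram, by rw [hfun, ← hVspan], hrankM, hrankMJM⟩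


lemma conj_mul {α β : Type*} [Fintype α] [Fintype β] (X : Matrix α β ℂ) {γ : Type*}
    [Fintype γ] (Y : Matrix β γ ℂ) (J : Matrix α α ℂ) :
    (X*Y)ᵀ * J * (X*Y) = Yᵀ * (Xᵀ * J * X) * Y := by
  simp only [Matrix.transpose_mul, Matrix.mul_assoc]

end Stmt15

open Stmt15 in
/-- Let `J` be an invertible skew-symmetric `2n×2n` complex matrix and
`Sp_{2n}(ℂ) = {g ∈ GL_{2n}(ℂ) : gᵀ J g = J}`. Two `2n×m` complex matrices `A`, `B`
lie in the same orbit of `Sp_{2n}(ℂ) × GL_m(ℂ)` acting by `(g,h)·M = g M h⁻¹`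
iff `rank A = rank B` and `rank (Aᵀ J A) = rank (Bᵀ J B)`. -/
theorem stmt_15 (n m : ℕ) (J : Matrix (Fin (2 * n)) (Fin (2 * n)) ℂ)
    (hJunit : IsUnit J) (hJskew : Jᵀ = -J)
    (A B : Matrix (Fin (2 * n)) (Fin m) ℂ) :
    (∃ (g : Matrix.GeneralLinearGroup (Fin (2 * n)) ℂ)
        (h : Matrix.GeneralLinearGroup (Fin m) ℂ),
      (g : Matrix (Fin (2 * n)) (Fin (2 * n)) ℂ)ᵀ * J *
          (g : Matrix (Fin (2 * n)) (Fin (2 * n)) ℂ) = J ∧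
      A = (g : Matrix (Fin (2 * n)) (Fin (2 * n)) ℂ) * B *
          ((h⁻¹ : Matrix.GeneralLinearGroup (Fin m) ℂ) : Matrix (Fin m) (Fin m) ℂ)) ↔
    (A.rank = B.rank ∧ (Aᵀ * J * A).rank = (Bᵀ * J * B).rank) := by
  constructor
  · -- easy direction
    rintro ⟨g, h, hsymp, heq⟩
    set gm : Matrix (Fin (2*n)) (Fin (2*n)) ℂ := (g : Matrix (Fin (2*n)) (Fin (2*n)) ℂ) with hgm
    set C : Matrix (Fin m) (Fin m) ℂ :=
      ((h⁻¹ : Matrix.GeneralLinearGroup (Fin m) ℂ) : Matrix (Fin m) (Fin m) ℂ) with hC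
    have hgd : IsUnit gm.det := (Matrix.isUnit_iff_isUnit_det _).mp (Units.isUnit g)
    have hCd : IsUnit C.det := (Matrix.isUnit_iff_isUnit_det _).mp (Units.isUnit (h⁻¹))
    have hCTd : IsUnit Cᵀ.det := by rwa [Matrix.det_transpose]
    constructor
    · rw [heq, Matrix.rank_mul_eq_left_of_isUnit_det C (gm * B) hCd,
        Matrix.rank_mul_eq_right_of_isUnit_det gm B hgd]
    · have h2 : (gm * B)ᵀ * J * (gm * B) = Bᵀ * J * B := by
        rw [Stmt15.conj_mul, hsymp]
      have hA : Aᵀ * J * A = Cᵀ * (Bᵀ * J * B) * C := by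
        rw [heq, Stmt15.conj_mul, h2]
      rw [hA, Matrix.rank_mul_eq_left_of_isUnit_det C (Cᵀ * (Bᵀ * J * B)) hCd,
        Matrix.rank_mul_eq_right_of_isUnit_det Cᵀ (Bᵀ * J * B) hCTd]
  · -- hard direction
    rintro ⟨hr1, hr2⟩
    obtain ⟨sA, tA, kA, hkA, hstA, QA, hQAu, hQAg, hQAr, hQAr1, hQAr2⟩ :=
      construct hJunit hJskew A
    obtain ⟨sB, tB, kB, hkB, hstB, QB, hQBu, hQBg, hQBr, hQBr1, hQBr2⟩ :=
      construct hJunit hJskew B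
    have hs : sB = sA := by omega
    subst hs
    have ht : tB = tA := by omega
    subst ht
    have hkk : kB = kA := by omega
    subst hkk
    have hQAd : IsUnit QA.det := (Matrix.isUnit_iff_isUnit_det _).mp hQAu
    have hQBd : IsUnit QB.det := (Matrix.isUnit_iff_isUnit_det _).mp hQBu
    set g : Matrix (Fin (2*n)) (Fin (2*n)) ℂ := QA * QB⁻¹ with hg
    have hPP : QAᵀ * J * QA = QBᵀ * J * QB := hQAg.trans hQBg.symm
    have hgQB : g * QB = QA := by
      rw [hg, Matrix.mul_assoc, Matrix.nonsing_inv_mul _ hQBd, Matrix.mul_one]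
    have hgsymp : gᵀ * J * g = J := by
      have h1 : gᵀ * J * g = QB⁻¹ᵀ * (QAᵀ * J * QA) * QB⁻¹ := by
        rw [hg]
        simp only [Matrix.transpose_mul, Matrix.mul_assoc]
      rw [h1, hPP]
      have h2 : QB⁻¹ᵀ * (QBᵀ * J * QB) * QB⁻¹ = (QB * QB⁻¹)ᵀ * J * (QB * QB⁻¹) := by
        simp only [Matrix.transpose_mul, Matrix.mul_assoc]
      rw [h2, Matrix.mul_nonsing_inv _ hQBd]
      simp
    have hcol : ∀ c, Matrix.mulVecLin g (fun r => QB r c) = (fun r => QA r c) := by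
      intro c
      funext r
      have h1 : (g *ᵥ (fun r => QB r c)) r = (g * QB) r c := by
        simp [Matrix.mulVec, dotProduct, Matrix.mul_apply]
      rw [Matrix.mulVecLin_apply, h1, hgQB]
    have hrange : LinearMap.range (g * B).mulVecLin = LinearMap.range A.mulVecLin := by
      rw [Matrix.mulVecLin_mul, LinearMap.range_comp, hQBr, Submodule.map_span, hQAr,
        ← Set.range_comp]
      exact congrArg (span ℂ) (congrArg Set.range (funext fun p => hcol _))
    obtain ⟨H, hHu, hAH⟩ := factor_of_range_eq A (g * B) hrange.symm
    have hgu : IsUnit g := by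
      have hd := congrArg Matrix.det hgQB
      rw [Matrix.det_mul] at hd
      rw [Matrix.isUnit_iff_isUnit_det]
      rw [← hd] at hQAd
      exact isUnit_of_mul_isUnit_left hQAd
    refine ⟨hgu.unit, (hHu.unit)⁻¹, ?_, ?_⟩
    · show (hgu.unit : Matrix (Fin (2*n)) (Fin (2*n)) ℂ)ᵀ * J * (hgu.unit : Matrix (Fin (2*n)) (Fin (2*n)) ℂ) = J
      rw [IsUnit.unit_spec]
      exact hgsymp
    · show A = (hgu.unit : Matrix (Fin (2*n)) (Fin (2*n)) ℂ) * B * ((((hHu.unit)⁻¹)⁻¹ : (Matrix (Fin m) (Fin m) ℂ)ˣ) : Matrix (Fin m) (Fin m) ℂ)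
      rw [inv_inv, IsUnit.unit_spec, IsUnit.unit_spec]
      rw [hAH, Matrix.mul_assoc, Matrix.mul_assoc]
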